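/- (Proposition 1, part (i).) Suppose ‖D‖ ≤ δ for a known δ > 0, and suppose there exist ε₁ ∈ ℝ, ε₂ ∈ ℝ, Y ∈ ℝ^{n×T}, and P = Pᵀ ∈ ℝ^{n×n} such that the block matrix [[−P, 0, Y U_{0,T}ᵀ, Y X_{1,T}ᵀ, −δ Y V_{0,T}ᵀ], [0, −ε₁P, 0, 0, δε₁P], [U_{0,T} Yᵀ, 0, −ε₁I, 0, 0], [X_{1,T} Yᵀ, 0, 0, −P + ε₂I, 0], [−δ V_{0,T} Yᵀ, δε₁P, 0, 0, −ε₂I]] is negative definite and P = X_{0,T} Yᵀ. Set Q := P⁻¹ and K := U_{0,T} Yᵀ (X_{0,T} Yᵀ)⁻¹ ∈ ℝ^{1×n}, and let f(x) := A x + B (K x) + D x (K x) be the closed-loop map. Then the Lyapunov function V(x) := xᵀ Q x satisfies V(f(x)) − V(x) < 0 for all x ∈ ℰ_Q \ {0}, where ℰ_Q := {x ∈ ℝⁿ : xᵀ Q x ≤ 1}. -/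

import Mathlib

open Matrix
open scoped Matrix.Norms.L2Operator

namespace DataLyapAux

lemma dot_self_nonneg {n : ℕ} (v : Fin n → ℝ) : 0 ≤ v ⬝ᵥ v :=
  Finset.sum_nonneg fun i _ => mul_self_nonneg _

lemma dot_self_pos {n : ℕ} {v : Fin n → ℝ} (hv : v ≠ 0) : 0 < v ⬝ᵥ v := by
  obtain ⟨i, hi⟩ : ∃ i, v i ≠ 0 := by
    by_contra h; push_neg at h; exact hv (funext h)
  have h1 : v i * v i ≤ v ⬝ᵥ v :=
    Finset.single_le_sum (f := fun j => v j * v j) (fun j _ => mul_self_nonneg _)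
      (Finset.mem_univ i)
  have h2 : 0 < v i * v i := mul_self_pos.mpr hi
  linarith

lemma dot_le_sqrt {n : ℕ} (v w : Fin n → ℝ) :
    v ⬝ᵥ w ≤ Real.sqrt (v ⬝ᵥ v) * Real.sqrt (w ⬝ᵥ w) := by
  have h1 : (v ⬝ᵥ w) ^ 2 ≤ (v ⬝ᵥ v) * (w ⬝ᵥ w) := by
    have h := Finset.sum_mul_sq_le_sq_mul_sq Finset.univ v w
    simpa [dotProduct, sq] using h
  calc v ⬝ᵥ w ≤ |v ⬝ᵥ w| := le_abs_self _
    _ = Real.sqrt ((v ⬝ᵥ w) ^ 2) := (Real.sqrt_sq_eq_abs _).symm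
    _ ≤ Real.sqrt ((v ⬝ᵥ v) * (w ⬝ᵥ w)) := Real.sqrt_le_sqrt h1
    _ = _ := Real.sqrt_mul (dot_self_nonneg v) _

lemma quad_entry {n : ℕ} (M : Matrix (Fin n) (Fin n) ℝ) (y z : Matrix (Fin n) (Fin 1) ℝ) :
    (yᵀ * M * z) 0 0 = (fun i => y i 0) ⬝ᵥ (M *ᵥ fun i => z i 0) := by
  simp only [Matrix.mul_apply, Matrix.mulVec, dotProduct, Matrix.transpose_apply,
    Finset.sum_mul, Finset.mul_sum, mul_assoc]
  exact Finset.sum_comm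

lemma col_mul {n m : ℕ} (A : Matrix (Fin n) (Fin m) ℝ) (y : Matrix (Fin m) (Fin 1) ℝ) :
    (fun i => (A * y) i 0) = A *ᵥ (fun i => y i 0) := by
  ext i; simp [Matrix.mul_apply, Matrix.mulVec, dotProduct]

lemma fin1_dot (a b : ℝ) : (fun _ : Fin 1 => a) ⬝ᵥ (fun _ : Fin 1 => b) = a * b := by
  simp [dotProduct]

lemma dot_mul_transpose {n m T : ℕ} (Y : Matrix (Fin n) (Fin T) ℝ)
    (Z : Matrix (Fin m) (Fin T) ℝ) (x : Fin n → ℝ) (t : Fin m → ℝ) :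
    x ⬝ᵥ ((Y * Zᵀ) *ᵥ t) = ((Z * Yᵀ) *ᵥ x) ⬝ᵥ t := by
  rw [show Y * Zᵀ = (Z * Yᵀ)ᵀ by simp [Matrix.transpose_mul], Matrix.dotProduct_mulVec,
    Matrix.vecMul_transpose]

lemma euclid_norm_sq {n : ℕ} (v : Fin n → ℝ) :
    ‖(EuclideanSpace.equiv (Fin n) ℝ).symm v‖ ^ 2 = v ⬝ᵥ v := by
  rw [EuclideanSpace.norm_eq]
  rw [Real.sq_sqrt (Finset.sum_nonneg fun i _ => sq_nonneg _)]
  simp [dotProduct, sq]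

lemma mulvec_sq_bound {n : ℕ} (D : Matrix (Fin n) (Fin n) ℝ) {δ : ℝ} (hδ : 0 ≤ δ)
    (hD : ‖D‖ ≤ δ) (w : Fin n → ℝ) :
    (D *ᵥ w) ⬝ᵥ (D *ᵥ w) ≤ δ ^ 2 * (w ⬝ᵥ w) := by
  have h := D.l2_opNorm_mulVec ((EuclideanSpace.equiv (Fin n) ℝ).symm w)
  have h2 : ‖(EuclideanSpace.equiv (Fin n) ℝ).symm (D *ᵥ w)‖ ≤
      δ * ‖(EuclideanSpace.equiv (Fin n) ℝ).symm w‖ := by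
    refine h.trans ?_
    gcongr
  have h3 := mul_self_le_mul_self (norm_nonneg _) h2
  rw [← sq, ← sq] at h3
  rw [mul_pow] at h3
  rw [euclid_norm_sq, euclid_norm_sq] at h3
  exact h3

end DataLyapAux

/-- The data-based 5×5 block matrix, with blocks of sizes `[n, n, 1, n, n]`,
`[[−P, 0, Y U₀ᵀ, Y X₁ᵀ, −δ Y V₀ᵀ], [0, −ε₁P, 0, 0, δε₁P], [U₀ Yᵀ, 0, −ε₁I, 0, 0],
[X₁ Yᵀ, 0, 0, −P + ε₂I, 0], [−δ V₀ Yᵀ, δε₁P, 0, 0, −ε₂I]]`. -/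
def dataBlockMat5 {n T : ℕ}
    (P : Matrix (Fin n) (Fin n) ℝ) (Y : Matrix (Fin n) (Fin T) ℝ)
    (U₀ : Matrix (Fin 1) (Fin T) ℝ) (X₁ V₀ : Matrix (Fin n) (Fin T) ℝ)
    (δ ε₁ ε₂ : ℝ) :
    Matrix (((Fin n ⊕ Fin n) ⊕ (Fin 1 ⊕ Fin n)) ⊕ Fin n)
      (((Fin n ⊕ Fin n) ⊕ (Fin 1 ⊕ Fin n)) ⊕ Fin n) ℝ :=
  Matrix.fromBlocks
    (Matrix.fromBlocks
      (Matrix.fromBlocks (-P) 0 0 (-(ε₁ • P)))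
      (Matrix.fromBlocks (Y * U₀ᵀ) (Y * X₁ᵀ) 0 0)
      (Matrix.fromBlocks (U₀ * Yᵀ) 0 (X₁ * Yᵀ) 0)
      (Matrix.fromBlocks (-(ε₁ • (1 : Matrix (Fin 1) (Fin 1) ℝ))) 0 0
        (-P + ε₂ • (1 : Matrix (Fin n) (Fin n) ℝ))))
    (Matrix.fromRows
      (Matrix.fromRows (-(δ • (Y * V₀ᵀ))) ((δ * ε₁) • P))
      (Matrix.fromRows (0 : Matrix (Fin 1) (Fin n) ℝ) (0 : Matrix (Fin n) (Fin n) ℝ)))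
    (Matrix.fromCols
      (Matrix.fromCols (-(δ • (V₀ * Yᵀ))) ((δ * ε₁) • P))
      (Matrix.fromCols (0 : Matrix (Fin n) (Fin 1) ℝ) (0 : Matrix (Fin n) (Fin n) ℝ)))
    (-(ε₂ • (1 : Matrix (Fin n) (Fin n) ℝ)))

set_option maxHeartbeats 1000000 in
/-- Proposition 1, part (i): the data-based LMI yields a Lyapunov function that
strictly decreases along the closed loop on the ellipsoid `ℰ_Q \ {0}`. -/
theorem data_based_lyapunov_decrease {n T : ℕ} (hn : 0 < n) (hT : 0 < T)
    (A : Matrix (Fin n) (Fin n) ℝ) (B : Matrix (Fin n) (Fin 1) ℝ)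
    (D : Matrix (Fin n) (Fin n) ℝ)
    (δ : ℝ) (hδ : 0 < δ) (hD : ‖D‖ ≤ δ)
    (u : ℕ → ℝ) (x : ℕ → Matrix (Fin n) (Fin 1) ℝ)
    (hdyn : ∀ t < T, x (t + 1) = A * x t + u t • B + u t • (D * x t))
    (U₀ : Matrix (Fin 1) (Fin T) ℝ)
    (hU₀ : U₀ = Matrix.of fun (_ : Fin 1) (t : Fin T) => u t)
    (X₀ : Matrix (Fin n) (Fin T) ℝ)
    (hX₀ : X₀ = Matrix.of fun (i : Fin n) (t : Fin T) => x t i 0)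
    (X₁ : Matrix (Fin n) (Fin T) ℝ)
    (hX₁ : X₁ = Matrix.of fun (i : Fin n) (t : Fin T) => x (t + 1) i 0)
    (V₀ : Matrix (Fin n) (Fin T) ℝ)
    (hV₀ : V₀ = Matrix.of fun (i : Fin n) (t : Fin T) => x t i 0 * u t)
    (ε₁ ε₂ : ℝ) (Y : Matrix (Fin n) (Fin T) ℝ)
    (P : Matrix (Fin n) (Fin n) ℝ) (hPsym : P = Pᵀ)
    (hblock : (-(dataBlockMat5 P Y U₀ X₁ V₀ δ ε₁ ε₂)).PosDef)
    (hP : P = X₀ * Yᵀ)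
    (Q : Matrix (Fin n) (Fin n) ℝ) (hQ : Q = P⁻¹)
    (K : Matrix (Fin 1) (Fin n) ℝ) (hK : K = U₀ * Yᵀ * (X₀ * Yᵀ)⁻¹)
    (f : Matrix (Fin n) (Fin 1) ℝ → Matrix (Fin n) (Fin 1) ℝ)
    (hf : ∀ y : Matrix (Fin n) (Fin 1) ℝ, f y = A * y + B * (K * y) + D * y * (K * y))
    (V : Matrix (Fin n) (Fin 1) ℝ → ℝ)
    (hV : ∀ y : Matrix (Fin n) (Fin 1) ℝ, V y = (yᵀ * Q * y) 0 0) :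
    ∀ y : Matrix (Fin n) (Fin 1) ℝ, (yᵀ * Q * y) 0 0 ≤ 1 → y ≠ 0 →
      V (f y) - V y < 0 := by
  classical
  have hM : ∀ v : (((Fin n ⊕ Fin n) ⊕ (Fin 1 ⊕ Fin n)) ⊕ Fin n) → ℝ, v ≠ 0 →
      v ⬝ᵥ ((dataBlockMat5 P Y U₀ X₁ V₀ δ ε₁ ε₂) *ᵥ v) < 0 := by
    intro v hv
    have h := hblock.dotProduct_mulVec_pos hv
    rw [star_trivial, Matrix.neg_mulVec, dotProduct_neg] at h
    linarith
  have hε₁ : 0 < ε₁ := by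
    have h := hM (Sum.elim (Sum.elim (Sum.elim 0 0) (Sum.elim (fun _ => 1) 0)) 0) (by
      intro hc
      have := congrFun hc (Sum.inl (Sum.inr (Sum.inl 0)))
      simpa using this)
    simp only [dataBlockMat5, Matrix.fromBlocks_mulVec, Sum.elim_comp_inl, Sum.elim_comp_inr,
      Matrix.fromRows_mulVec, Matrix.fromCols_mulVec_sumElim,
      sumElim_dotProduct_sumElim, dotProduct_add, Matrix.zero_mulVec,
      Matrix.mulVec_zero, dotProduct_zero, zero_dotProduct, add_zero, zero_add,
      Matrix.neg_mulVec, dotProduct_neg, Matrix.smul_mulVec, Matrix.one_mulVec,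
      dotProduct_smul, smul_eq_mul] at h
    simp [dotProduct] at h
    linarith
  have hε₂ : 0 < ε₂ := by
    have h := hM (Sum.elim 0 (Pi.single ⟨0, hn⟩ 1)) (by
      intro hc
      have := congrFun hc (Sum.inr ⟨0, hn⟩)
      simpa using this)
    simp only [dataBlockMat5, Matrix.fromBlocks_mulVec, Sum.elim_comp_inl, Sum.elim_comp_inr,
      Matrix.fromRows_mulVec, Matrix.fromCols_mulVec_sumElim,
      sumElim_dotProduct_sumElim, dotProduct_add, Matrix.zero_mulVec,
      Matrix.mulVec_zero, dotProduct_zero, zero_dotProduct, add_zero, zero_add,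
      Matrix.neg_mulVec, dotProduct_neg, Matrix.smul_mulVec, Matrix.one_mulVec,
      dotProduct_smul, smul_eq_mul] at h
    simp [dotProduct, Pi.single_apply] at h
    linarith
  have hPpd : P.PosDef := by
    refine Matrix.PosDef.of_dotProduct_mulVec_pos ?_ ?_
    · show Pᴴ = P
      rw [Matrix.conjTranspose_eq_transpose_of_trivial, ← hPsym]
    · intro z hz
      have h := hM (Sum.elim (Sum.elim (Sum.elim z 0) 0) 0) (by
        intro hc
        apply hz
        ext i
        exact congrFun hc (Sum.inl (Sum.inl (Sum.inl i))))
      simp only [dataBlockMat5, Matrix.fromBlocks_mulVec, Sum.elim_comp_inl, Sum.elim_comp_inr,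
        Matrix.fromRows_mulVec, Matrix.fromCols_mulVec_sumElim,
        sumElim_dotProduct_sumElim, dotProduct_add, Matrix.zero_mulVec,
        Matrix.mulVec_zero, dotProduct_zero, zero_dotProduct, add_zero, zero_add,
        Matrix.neg_mulVec, dotProduct_neg, Matrix.smul_mulVec, Matrix.one_mulVec,
        dotProduct_smul, smul_eq_mul] at h
      rw [star_trivial]
      linarith
  have hdet : IsUnit P.det := hPpd.det_pos.ne'.isUnit
  have hQP : Q * P = 1 := by rw [hQ]; exact Matrix.nonsing_inv_mul P hdet
  have hPQ : P * Q = 1 := by rw [hQ]; exact Matrix.mul_nonsing_inv P hdet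
  have hKP : K * P = U₀ * Yᵀ := by
    rw [hK, ← hP, Matrix.mul_assoc, Matrix.nonsing_inv_mul P hdet, Matrix.mul_one]
  have hdata : X₁ = A * X₀ + B * U₀ + D * V₀ := by
    subst hX₁ hX₀ hU₀ hV₀
    ext i t
    have h := hdyn t t.2
    have he : x (t + 1 : ℕ) i 0 = (A * x t + u t • B + u t • (D * x t)) i 0 := by rw [h]
    simp only [Matrix.add_apply, Matrix.smul_apply, Matrix.mul_apply, Matrix.of_apply,
      smul_eq_mul, Fin.sum_univ_one] at he ⊢
    have e1 : ∑ j, D i j * (x (t : ℕ) j 0 * u t) = u t * ∑ j, D i j * x (t : ℕ) j 0 := by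
      rw [Finset.mul_sum]; exact Finset.sum_congr rfl fun j _ => by ring
    rw [he, e1]; ring
  intro y hy1 hy0
  set yv : Fin n → ℝ := fun i => y i 0 with hyvdef
  have hyv0 : yv ≠ 0 := by
    intro hc
    apply hy0
    ext i j
    have hj : j = 0 := Subsingleton.elim _ _
    subst hj
    have := congrFun hc i
    simpa [hyvdef] using this
  set q : Fin n → ℝ := Q *ᵥ yv with hqdef
  have hPq : P *ᵥ q = yv := by rw [hqdef, Matrix.mulVec_mulVec, hPQ, Matrix.one_mulVec]
  have hq0 : q ≠ 0 := by
    intro hc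
    apply hyv0
    rw [← hPq, hc, Matrix.mulVec_zero]
  set al : ℝ := yv ⬝ᵥ q with haldef
  have hal1 : al ≤ 1 := by
    rw [haldef, hqdef, hyvdef, ← DataLyapAux.quad_entry]
    exact hy1
  set u₀ : ℝ := (K *ᵥ yv) 0 with hu₀def
  have hUq : (U₀ * Yᵀ) *ᵥ q = fun _ => u₀ := by
    rw [← hKP, ← Matrix.mulVec_mulVec, hPq]
    funext j
    have hj : j = 0 := Subsingleton.elim _ _
    subst hj
    rw [hu₀def]
  set av : Fin n → ℝ := (X₁ * Yᵀ) *ᵥ q with havdef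
  set bv : Fin n → ℝ := (V₀ * Yᵀ) *ᵥ q with hbdef
  set wv : Fin n → ℝ := u₀ • yv - bv with hwvdef
  set fv : Fin n → ℝ := av + D *ᵥ wv with hfdef
  have hABK : (A + B * K) * P = X₁ * Yᵀ - D * (V₀ * Yᵀ) := by
    have h0 : X₁ * Yᵀ = A * (X₀ * Yᵀ) + B * (U₀ * Yᵀ) + D * (V₀ * Yᵀ) := by
      rw [hdata, Matrix.add_mul, Matrix.add_mul, Matrix.mul_assoc, Matrix.mul_assoc,
        Matrix.mul_assoc]
    rw [h0, ← hP, ← hKP, Matrix.add_mul, ← Matrix.mul_assoc]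
    abel
  have hfmat : f y = X₁ * Yᵀ * (Q * y) + D * ((K * y) 0 0 • y - V₀ * Yᵀ * (Q * y)) := by
    have h1 : D * y * (K * y) = (K * y) 0 0 • (D * y) := by
      ext i j
      have hj : j = 0 := Subsingleton.elim _ _
      subst hj
      simp [Matrix.mul_apply, Fin.sum_univ_one, mul_comm]
    have h2 : A * y + B * (K * y) = ((A + B * K) * P) * (Q * y) := by
      rw [Matrix.mul_assoc, ← Matrix.mul_assoc P Q y, hPQ, Matrix.one_mul, Matrix.add_mul,
        Matrix.mul_assoc]
    have h3 : D * ((K * y) 0 0 • y - V₀ * Yᵀ * (Q * y)) =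
        (K * y) 0 0 • (D * y) - D * (V₀ * Yᵀ * (Q * y)) := by
      rw [Matrix.mul_sub, Matrix.mul_smul]
    rw [hf y, h1, h2, hABK, h3, Matrix.sub_mul, Matrix.mul_assoc D (V₀ * Yᵀ) (Q * y)]
    abel
  have cQ : (fun i => (Q * y) i 0) = q := by
    rw [hqdef, hyvdef]; exact DataLyapAux.col_mul Q y
  have cX : (fun i => (X₁ * Yᵀ * (Q * y)) i 0) = av := by
    rw [havdef, ← cQ]; exact DataLyapAux.col_mul (X₁ * Yᵀ) (Q * y)
  have cV : (fun i => (V₀ * Yᵀ * (Q * y)) i 0) = bv := by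
    rw [hbdef, ← cQ]; exact DataLyapAux.col_mul (V₀ * Yᵀ) (Q * y)
  have cK : (K * y) 0 0 = u₀ := by
    rw [hu₀def, hyvdef]
    exact congrFun (DataLyapAux.col_mul K y) 0
  have cS : (fun i => ((K * y) 0 0 • y - V₀ * Yᵀ * (Q * y)) i 0) = wv := by
    funext i
    simp only [Matrix.sub_apply, Matrix.smul_apply, smul_eq_mul, cK]
    rw [show (V₀ * Yᵀ * (Q * y)) i 0 = bv i from congrFun cV i, hwvdef]
    simp [hyvdef]
  have hfy : (fun i => f y i 0) = fv := by
    funext i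
    rw [hfmat]
    simp only [Matrix.add_apply]
    rw [congrFun cX i,
      congrFun (DataLyapAux.col_mul D ((K * y) 0 0 • y - V₀ * Yᵀ * (Q * y))) i]
    rw [cS, hfdef]
    rfl
  have hqP : ∀ z : Fin n → ℝ, q ⬝ᵥ (P *ᵥ z) = yv ⬝ᵥ z := by
    intro z
    rw [Matrix.dotProduct_mulVec, ← Matrix.mulVec_transpose, ← hPsym, hPq]
  set s : ℝ := u₀ / ε₁ with hsdef
  have hs : ε₁ * s = u₀ := by rw [hsdef]; field_simp
  have hc0 : 0 ≤ s * u₀ := by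
    have : s * u₀ = u₀ ^ 2 / ε₁ := by rw [hsdef]; ring
    rw [this]; positivity
  have key : ∀ η ξ : Fin n → ℝ,
      2 * (av ⬝ᵥ η) - η ⬝ᵥ (P *ᵥ η) + ε₂ * (η ⬝ᵥ η) + 2 * δ * (ξ ⬝ᵥ wv) - ε₂ * (ξ ⬝ᵥ ξ)
        < (1 + s * u₀) * al - s * u₀ := by
    intro η ξ
    have hv0 : (Sum.elim (Sum.elim (Sum.elim q (s • q)) (Sum.elim (fun (_ : Fin 1) => s) η)) ξ) ≠ 0 := by
      intro hc
      apply hq0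
      funext i
      exact congrFun hc (Sum.inl (Sum.inl (Sum.inl i)))
    have hval := hM _ hv0
    simp only [dataBlockMat5, Matrix.fromBlocks_mulVec, Sum.elim_comp_inl, Sum.elim_comp_inr,
      Matrix.fromRows_mulVec, Matrix.fromCols_mulVec_sumElim,
      sumElim_dotProduct_sumElim, dotProduct_add, Matrix.add_mulVec,
      Matrix.zero_mulVec, Matrix.mulVec_zero, dotProduct_zero, zero_dotProduct,
      add_zero, zero_add, Matrix.neg_mulVec, dotProduct_neg, neg_dotProduct,
      Matrix.smul_mulVec, Matrix.mulVec_smul, dotProduct_smul,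
      smul_dotProduct, Matrix.one_mulVec, smul_eq_mul, hPq, hUq, hqP,
      DataLyapAux.dot_mul_transpose, DataLyapAux.fin1_dot, mul_zero, zero_mul] at hval
    rw [show ((Y * X₁ᵀ) *ᵥ η) ⬝ᵥ q = ((X₁ * Yᵀ) *ᵥ q) ⬝ᵥ η from by
        rw [dotProduct_comm]; exact DataLyapAux.dot_mul_transpose Y X₁ q η,
      show ((Y * V₀ᵀ) *ᵥ ξ) ⬝ᵥ q = ((V₀ * Yᵀ) *ᵥ q) ⬝ᵥ ξ from by
        rw [dotProduct_comm]; exact DataLyapAux.dot_mul_transpose Y V₀ q ξ] at hval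
    simp only [dotProduct_comm q yv, dotProduct_comm ξ yv] at hval
    rw [← haldef, ← havdef, ← hbdef] at hval
    have hxw : ξ ⬝ᵥ wv = u₀ * (yv ⬝ᵥ ξ) - bv ⬝ᵥ ξ := by
      rw [hwvdef, dotProduct_sub, dotProduct_smul, smul_eq_mul,
        dotProduct_comm ξ yv, dotProduct_comm ξ bv]
    rw [hxw, ← hs]
    rw [← hs] at hval
    linarith [hval]
  have hfQ : P *ᵥ (Q *ᵥ fv) = fv := by rw [Matrix.mulVec_mulVec, hPQ, Matrix.one_mulVec]
  have hVfy : V (f y) = fv ⬝ᵥ (Q *ᵥ fv) := by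
    rw [hV, DataLyapAux.quad_entry, hfy]
  have hVy : V y = al := by
    rw [hV, DataLyapAux.quad_entry, ← hyvdef, ← hqdef]
  have hβkey : ∀ ξ : Fin n → ℝ,
      fv ⬝ᵥ (Q *ᵥ fv) + (ε₂ * ((Q *ᵥ fv) ⬝ᵥ (Q *ᵥ fv)) - 2 * ((D *ᵥ wv) ⬝ᵥ (Q *ᵥ fv))
        + 2 * δ * (ξ ⬝ᵥ wv) - ε₂ * (ξ ⬝ᵥ ξ)) < (1 + s * u₀) * al - s * u₀ := by
    intro ξ
    have h := key (Q *ᵥ fv) ξ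
    have e1 : (Q *ᵥ fv) ⬝ᵥ (P *ᵥ (Q *ᵥ fv)) = fv ⬝ᵥ (Q *ᵥ fv) := by
      rw [hfQ, dotProduct_comm]
    have e2 : av ⬝ᵥ (Q *ᵥ fv) = fv ⬝ᵥ (Q *ᵥ fv) - (D *ᵥ wv) ⬝ᵥ (Q *ᵥ fv) := by
      have hav : av = fv - D *ᵥ wv := by rw [hfdef]; abel
      rw [hav, sub_dotProduct]
    rw [e1, e2] at h
    linarith
  have hβ : fv ⬝ᵥ (Q *ᵥ fv) < (1 + s * u₀) * al - s * u₀ := by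
    by_cases hw : wv = 0
    · have h := hβkey 0
      simp only [hw, Matrix.mulVec_zero, zero_dotProduct, dotProduct_zero,
        mul_zero, sub_zero, add_zero, zero_sub] at h
      have hQQ : 0 ≤ (Q *ᵥ fv) ⬝ᵥ (Q *ᵥ fv) := DataLyapAux.dot_self_nonneg _
      have hmn : 0 ≤ ε₂ * ((Q *ᵥ fv) ⬝ᵥ (Q *ᵥ fv)) := mul_nonneg hε₂.le hQQ
      linarith [h, hmn]
    · set nw : ℝ := Real.sqrt (wv ⬝ᵥ wv) with hnwdef
      set nη : ℝ := Real.sqrt ((Q *ᵥ fv) ⬝ᵥ (Q *ᵥ fv)) with hnηdef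
      have hnw : 0 < nw := Real.sqrt_pos.mpr (DataLyapAux.dot_self_pos hw)
      have hnη : 0 ≤ nη := Real.sqrt_nonneg _
      have hnw2 : nw ^ 2 = wv ⬝ᵥ wv := Real.sq_sqrt (DataLyapAux.dot_self_nonneg _)
      have hnη2 : nη ^ 2 = (Q *ᵥ fv) ⬝ᵥ (Q *ᵥ fv) := Real.sq_sqrt (DataLyapAux.dot_self_nonneg _)
      have h := hβkey ((nη / nw) • wv)
      simp only [smul_dotProduct, dotProduct_smul, smul_eq_mul] at h
      have c1 : nη / nw * (wv ⬝ᵥ wv) = nη * nw := by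
        rw [← hnw2]; field_simp
      have c2 : nη / nw * (nη / nw * (wv ⬝ᵥ wv)) = nη ^ 2 := by
        rw [← hnw2]; field_simp
      rw [c2, c1] at h
      have hcs := DataLyapAux.dot_le_sqrt (D *ᵥ wv) (Q *ᵥ fv)
      have hDb := DataLyapAux.mulvec_sq_bound D hδ.le hD wv
      have hsq : Real.sqrt ((D *ᵥ wv) ⬝ᵥ (D *ᵥ wv)) ≤ δ * nw := by
        rw [show δ * nw = Real.sqrt ((δ * nw) ^ 2) from (Real.sqrt_sq (by positivity)).symm]
        apply Real.sqrt_le_sqrt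
        rw [mul_pow, hnw2]
        exact hDb
      have hcs2 : (D *ᵥ wv) ⬝ᵥ (Q *ᵥ fv) ≤ δ * nw * nη := by
        refine hcs.trans ?_
        rw [← hnηdef]
        exact mul_le_mul_of_nonneg_right hsq hnη
      rw [← hnη2] at h
      linarith [h, hcs2]
  have hC : (1 + s * u₀) * al - s * u₀ ≤ al := by nlinarith [hc0, hal1]

  rw [hVfy, hVy]
  linarith
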